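/- The function g(x) = (x·tanh x)^{1/2} is strictly concave on (0,∞). Consequently, for every μ > 0 the dispersion function λ_μ is strictly concave on (0,∞) and its derivative λ_μ' is strictly decreasing on (0,∞). -/

import Mathlib

/-!
Statement 7: the function `g(x) = (x·tanh x)^{1/2}` is strictly concave on `(0,∞)`;
consequently, for every `μ > 0` the dispersion function `λ_μ` is strictly concave
on `(0,∞)` and its derivative `λ_μ'` is strictly decreasing on `(0,∞)`.
-/

noncomputable section

/-- The dispersion function of the linear water wave problem. -/
def lamμ (μ : ℝ) (r : ℝ) : ℝ :=
  Real.sign r * Real.sqrt (r * Real.tanh (Real.sqrt μ * r) / Real.sqrt μ)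

open Real Set Filter

/-- Derivative of `tanh`. -/
lemma myHasDerivAt_tanh (x : ℝ) : HasDerivAt Real.tanh (1 / Real.cosh x ^ 2) x := by
  have h := (Real.hasDerivAt_sinh x).div (Real.hasDerivAt_cosh x) (Real.cosh_pos x).ne'
  have hfun : (Real.sinh / Real.cosh) = Real.tanh := by
    funext y; rw [Pi.div_apply, Real.tanh_eq_sinh_div_cosh]
  rw [hfun] at h
  have := Real.cosh_sq_sub_sinh_sq x
  exact h.congr_deriv (by rw [← Real.cosh_sq_sub_sinh_sq x]; ring)

lemma my_tanh_pos {x : ℝ} (hx : 0 < x) : 0 < Real.tanh x := by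
  rw [Real.tanh_eq_sinh_div_cosh]
  exact div_pos (by rwa [Real.sinh_pos_iff]) (Real.cosh_pos x)

lemma my_h_pos {x : ℝ} (hx : 0 < x) : 0 < x * Real.tanh x :=
  mul_pos hx (my_tanh_pos hx)

/-- The first derivative of `g`. -/
noncomputable def Gfun (x : ℝ) : ℝ :=
  (Real.tanh x + x / Real.cosh x ^ 2) / (2 * Real.sqrt (x * Real.tanh x))

lemma hasDerivAt_g {x : ℝ} (hx : 0 < x) :
    HasDerivAt (fun y => Real.sqrt (y * Real.tanh y)) (Gfun x) x := by
  have hh : HasDerivAt (fun y => y * Real.tanh y)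
      (Real.tanh x + x / Real.cosh x ^ 2) x := by
    have := (hasDerivAt_id x).mul (myHasDerivAt_tanh x)
    exact this.congr_deriv (by simp only [id, one_mul, mul_one_div])
  have := hh.sqrt (my_h_pos hx).ne'
  simpa [Gfun] using this

lemma hasDerivAt_G {x : ℝ} (hx : 0 < x) : ∃ v, HasDerivAt Gfun v x ∧ v < 0 := by
  have hc := Real.cosh_pos x
  have hcs := Real.cosh_sq_sub_sinh_sq x
  have hs : 0 < Real.sinh x := by rwa [Real.sinh_pos_iff]
  have hT : Real.tanh x = Real.sinh x / Real.cosh x := Real.tanh_eq_sinh_div_cosh x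
  have hhp : 0 < x * Real.tanh x := my_h_pos hx
  have hq : 0 < Real.sqrt (x * Real.tanh x) := Real.sqrt_pos.mpr hhp
  have hq2 : Real.sqrt (x * Real.tanh x) ^ 2 = x * Real.tanh x := Real.sq_sqrt hhp.le
  -- derivative of the numerator N y = tanh y + y / cosh y ^ 2
  have hN : HasDerivAt (fun y => Real.tanh y + y / Real.cosh y ^ 2)
      (1 / Real.cosh x ^ 2 +
        ((1 * Real.cosh x ^ 2 - x * (2 * Real.cosh x ^ 1 * Real.sinh x)) /
          (Real.cosh x ^ 2) ^ 2)) x := by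
    have h1 : HasDerivAt (fun y => Real.cosh y ^ 2)
        (2 * Real.cosh x ^ 1 * Real.sinh x) x := (Real.hasDerivAt_cosh x).pow 2
    have h2 := (hasDerivAt_id x).div h1 (by positivity)
    simp only [id_eq] at h2
    exact (myHasDerivAt_tanh x).add h2
  -- derivative of the denominator D y = 2 * sqrt (y * tanh y)
  have hD : HasDerivAt (fun y => 2 * Real.sqrt (y * Real.tanh y))
      (2 * Gfun x) x := (hasDerivAt_g hx).const_mul 2
  have hDne : 2 * Real.sqrt (x * Real.tanh x) ≠ 0 := by positivity
  have hGdef : Gfun = fun y => (Real.tanh y + y / Real.cosh y ^ 2) /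
      (2 * Real.sqrt (y * Real.tanh y)) := rfl
  have hG := hN.div hD hDne
  change HasDerivAt Gfun _ x at hG
  refine ⟨_, hG, ?_⟩
  -- show the derivative value is negative
  set c := Real.cosh x with hcdef
  set s := Real.sinh x with hsdef
  set q := Real.sqrt (x * Real.tanh x) with hqdef
  set N' : ℝ := 1 / c ^ 2 + ((1 * c ^ 2 - x * (2 * c ^ 1 * s)) / (c ^ 2) ^ 2) with hN'def
  set N : ℝ := Real.tanh x + x / c ^ 2 with hNdef
  have hGx : Gfun x = N / (2 * q) := rfl
  rw [hGx]
  apply div_neg_of_neg_of_pos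
  swap
  · positivity
  -- numerator: N' * (2q) - N * (2 * (N / (2q))) < 0
  have hnum : (N' * (2 * q) - N * (2 * (N / (2 * q)))) * q
      = 2 * N' * (x * Real.tanh x) - N ^ 2 := by
    rw [← hq2]; field_simp
  have key : 2 * N' * (x * Real.tanh x) - N ^ 2
      = -(((s * c - x) ^ 2 + 4 * x ^ 2 * s ^ 2) / c ^ 4) := by
    rw [hN'def, hNdef, hT]
    have hc' : c ≠ 0 := hc.ne'
    field_simp
    nlinarith [hcs, sq_nonneg c, sq_nonneg s]
  have hneg : (N' * (2 * q) - N * (2 * (N / (2 * q)))) * q < 0 := by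
    rw [hnum, key]
    have : 0 < ((s * c - x) ^ 2 + 4 * x ^ 2 * s ^ 2) / c ^ 4 := by positivity
    linarith
  nlinarith [hq, hneg]

lemma deriv_g_eq {x : ℝ} (hx : 0 < x) :
    deriv (fun y => Real.sqrt (y * Real.tanh y)) x = Gfun x := (hasDerivAt_g hx).deriv

lemma G_strictAnti : StrictAntiOn Gfun (Set.Ioi (0 : ℝ)) := by
  apply strictAntiOn_of_deriv_neg (convex_Ioi 0)
  · intro x hx
    obtain ⟨v, hv, _⟩ := hasDerivAt_G hx
    exact hv.differentiableAt.continuousAt.continuousWithinAt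
  · intro x hx
    rw [interior_Ioi] at hx
    obtain ⟨v, hv, hvneg⟩ := hasDerivAt_G hx
    rw [hv.deriv]; exact hvneg

lemma deriv2_g_neg {x : ℝ} (hx : 0 < x) :
    deriv (deriv (fun y => Real.sqrt (y * Real.tanh y))) x < 0 := by
  have hev : deriv (fun y => Real.sqrt (y * Real.tanh y)) =ᶠ[nhds x] Gfun :=
    Filter.eventually_of_mem (isOpen_Ioi.mem_nhds hx) fun y hy => deriv_g_eq hy
  rw [hev.deriv_eq]
  obtain ⟨v, hv, hvneg⟩ := hasDerivAt_G hx
  rw [hv.deriv]; exact hvneg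

lemma g_strictConcave :
    StrictConcaveOn ℝ (Set.Ioi (0 : ℝ)) (fun x => Real.sqrt (x * Real.tanh x)) := by
  apply strictConcaveOn_of_deriv2_neg (convex_Ioi 0)
  · intro x hx
    exact (hasDerivAt_g hx).differentiableAt.continuousAt.continuousWithinAt
  · intro x hx
    rw [interior_Ioi] at hx
    simpa [Function.iterate_succ, Function.comp] using deriv2_g_neg hx

lemma hasDerivAt_lam {μ r : ℝ} (hμ : 0 < μ) (hr : 0 < r) :
    HasDerivAt (lamμ μ) (Gfun (Real.sqrt μ * r)) r := by
  have hsμ : 0 < Real.sqrt μ := Real.sqrt_pos.mpr hμ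
  have h1 : HasDerivAt (fun y : ℝ => Real.sqrt μ * y) (Real.sqrt μ) r := by
    simpa using (hasDerivAt_id r).const_mul (Real.sqrt μ)
  have h2 : HasDerivAt (fun y => Real.sqrt ((Real.sqrt μ * y) * Real.tanh (Real.sqrt μ * y)))
      (Gfun (Real.sqrt μ * r) * Real.sqrt μ) r :=
    (hasDerivAt_g (mul_pos hsμ hr)).comp r h1
  have h3 : HasDerivAt
      (fun y => Real.sqrt ((Real.sqrt μ * y) * Real.tanh (Real.sqrt μ * y)) / Real.sqrt μ)
      (Gfun (Real.sqrt μ * r) * Real.sqrt μ / Real.sqrt μ) r := h2.div_const _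
  rw [mul_div_cancel_right₀ _ hsμ.ne'] at h3
  apply h3.congr_of_eventuallyEq
  filter_upwards [isOpen_Ioi.mem_nhds hr] with y hy
  have hy' : (0 : ℝ) < y := hy
  rw [lamμ, Real.sign_of_pos hy', one_mul, ← Real.sqrt_div' _ hμ.le]
  congr 1
  have hμeq : Real.sqrt μ * Real.sqrt μ = μ := Real.mul_self_sqrt hμ.le
  rw [div_eq_div_iff hsμ.ne' hμ.ne']
  linear_combination (-(y * Real.tanh (Real.sqrt μ * y))) * hμeq

lemma deriv_lam_eq {μ r : ℝ} (hμ : 0 < μ) (hr : 0 < r) :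
    deriv (lamμ μ) r = Gfun (Real.sqrt μ * r) := (hasDerivAt_lam hμ hr).deriv

theorem sqrt_mul_tanh_strictConcave_and_lamμ_strictConcave :
    StrictConcaveOn ℝ (Set.Ioi (0 : ℝ)) (fun x => Real.sqrt (x * Real.tanh x))
    ∧ ∀ μ : ℝ, 0 < μ →
        StrictConcaveOn ℝ (Set.Ioi (0 : ℝ)) (lamμ μ)
        ∧ StrictAntiOn (deriv (lamμ μ)) (Set.Ioi (0 : ℝ)) := by
  refine ⟨g_strictConcave, fun μ hμ => ⟨?_, ?_⟩⟩
  · have hsμ : 0 < Real.sqrt μ := Real.sqrt_pos.mpr hμ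
    apply strictConcaveOn_of_deriv2_neg (convex_Ioi 0)
    · intro r hr
      exact (hasDerivAt_lam hμ hr).differentiableAt.continuousAt.continuousWithinAt
    · intro r hr
      rw [interior_Ioi] at hr
      have hev : deriv (lamμ μ) =ᶠ[nhds r] fun y => Gfun (Real.sqrt μ * y) :=
        Filter.eventually_of_mem (isOpen_Ioi.mem_nhds hr) fun y hy => deriv_lam_eq hμ hy
      obtain ⟨v, hv, hvneg⟩ := hasDerivAt_G (mul_pos hsμ hr)
      have h1 : HasDerivAt (fun y : ℝ => Real.sqrt μ * y) (Real.sqrt μ) r := by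
        simpa using (hasDerivAt_id r).const_mul (Real.sqrt μ)
      have h2 : HasDerivAt (fun y => Gfun (Real.sqrt μ * y)) (v * Real.sqrt μ) r :=
        hv.comp r h1
      have : deriv (deriv (lamμ μ)) r = v * Real.sqrt μ := by
        rw [hev.deriv_eq, h2.deriv]
      simp only [Function.iterate_succ, Function.iterate_zero, Function.comp_apply, id]
      rw [this]
      exact mul_neg_of_neg_of_pos hvneg hsμ
  · intro a ha b hb hab
    have hsμ : 0 < Real.sqrt μ := Real.sqrt_pos.mpr hμ
    have ha' : (0 : ℝ) < a := ha
    have hb' : (0 : ℝ) < b := hb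
    rw [deriv_lam_eq hμ ha', deriv_lam_eq hμ hb']
    exact G_strictAnti (Set.mem_Ioi.mpr (mul_pos hsμ ha')) (Set.mem_Ioi.mpr (mul_pos hsμ hb'))
      (by nlinarith)
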